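/- Let A : ℂ → Matrix n n ℂ be such that A(x) commutes with a primitive B(x) (i.e. B′(x) = A(x) and A(x) * B(x) = B(x) * A(x) for all x in an open set). Then for any constant vector c, the function Y(x) = exp(B(x)) c satisfies Y′(x) = A(x) Y(x). -/

import Mathlib

section AuxLinfty
open NormedSpace

attribute [local instance] Matrix.linftyOpNormedRing Matrix.linftyOpNormedAlgebra

/-- Derivative of `exp ∘ B` in a Banach algebra when the derivative commutes with the value. -/
theorem auxExpDeriv {𝔸 : Type*} [NormedRing 𝔸] [NormedAlgebra ℂ 𝔸] [CompleteSpace 𝔸]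
    {B : ℂ → 𝔸} {A : 𝔸} {x : ℂ} (hB : HasDerivAt B A x) (hc : Commute A (B x)) :
    HasDerivAt (fun y => exp (B y)) (A * exp (B x)) x := by
  have hd : DifferentiableAt ℂ exp (B x) :=
    (analyticAt_exp_of_mem_ball (𝕂 := ℂ) (B x)
      (by simp [expSeries_radius_eq_top])).differentiableAt
  set D := fderiv ℂ exp (B x) with hDdef
  have hfd : HasFDerivAt exp D (B x) := hd.hasFDerivAt
  have hline : HasDerivAt (fun t : ℂ => B x + t • A) A 0 := by
    simpa using ((hasDerivAt_id (0 : ℂ)).smul_const A).const_add (B x)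
  have h1 : HasDerivAt (fun t : ℂ => exp (B x + t • A)) (D A) 0 := by
    have hfd0 : HasFDerivAt exp D (B x + (0:ℂ) • A) := by simpa using hfd
    exact hfd0.comp_hasDerivAt (0 : ℂ) hline
  have h2 : HasDerivAt (fun t : ℂ => exp (B x + t • A)) (exp (B x) * A) 0 := by
    have heq : (fun t : ℂ => exp (B x + t • A)) =
        fun t : ℂ => exp (B x) * exp (t • A) := by
      funext t
      exact exp_add_of_commute_of_mem_ball (𝕂 := ℂ) (hc.symm.smul_right t)
        (by simp [expSeries_radius_eq_top]) (by simp [expSeries_radius_eq_top])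
    rw [heq]
    simpa using (hasDerivAt_exp_smul_const A (0 : ℂ)).const_mul (exp (B x))
  have hDA : D A = exp (B x) * A := h1.unique h2
  have hmain := hfd.comp_hasDerivAt x hB
  rw [hDA, ← (hc.exp_right).eq] at hmain
  exact hmain

/-- Entrywise derivatives give a derivative in the `linfty` operator norm. -/
theorem auxEntrywise {n : Type*} [Fintype n] [DecidableEq n]
    {B : ℂ → Matrix n n ℂ} {A' : Matrix n n ℂ} {x : ℂ}
    (h : ∀ i j, HasDerivAt (fun y => B y i j) (A' i j) x) :
    HasDerivAt B A' x := by
  have hsum : HasDerivAt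
      (fun y => ∑ i, ∑ j, Matrix.single i j (B y i j))
      (∑ i, ∑ j, Matrix.single i j (A' i j)) x := by
    refine HasDerivAt.fun_sum fun i _ => HasDerivAt.fun_sum fun j _ => ?_
    have := (h i j).smul_const (Matrix.single i j (1 : ℂ))
    simpa [Matrix.smul_single] using this
  have e1 : (fun y => ∑ i, ∑ j, Matrix.single i j (B y i j)) = B := by
    funext y
    exact (Matrix.matrix_eq_sum_single (B y)).symm
  have e2 : (∑ i, ∑ j, Matrix.single i j (A' i j)) = A' :=
    (Matrix.matrix_eq_sum_single A').symm
  rwa [e1, e2] at hsum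

theorem auxMain {n : Type*} [Fintype n] [DecidableEq n]
    (A' : Matrix n n ℂ) (B : ℂ → Matrix n n ℂ) (x : ℂ)
    (hB : ∀ i j, HasDerivAt (fun y => B y i j) (A' i j) x)
    (hcomm : Commute A' (B x)) (c : n → ℂ) :
    HasDerivAt (fun y : ℂ => (exp (B y)).mulVec c)
      (A'.mulVec ((exp (B x)).mulVec c)) x := by
  have hB' : HasDerivAt B A' x := auxEntrywise hB
  have hexp := auxExpDeriv hB' hcomm
  let L0 : Matrix n n ℂ →ₗ[ℂ] (n → ℂ) :=
    { toFun := fun M => M.mulVec c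
      map_add' := fun M N => Matrix.add_mulVec M N c
      map_smul' := fun a M => Matrix.smul_mulVec a M c }
  let L := L0.toContinuousLinearMap
  have hcomp := L.hasFDerivAt.comp_hasDerivAt x hexp
  have : L (A' * exp (B x)) = A'.mulVec ((exp (B x)).mulVec c) := by
    show (A' * exp (B x)).mulVec c = _
    rw [← Matrix.mulVec_mulVec]
  replace hcomp := hcomp.congr_deriv this
  exact hcomp

end AuxLinfty

attribute [local instance] Matrix.normedAddCommGroup Matrix.normedSpace

theorem stmt_4 {n : Type*} [Fintype n] [DecidableEq n]
    (A B : ℂ → Matrix n n ℂ) (U : Set ℂ) (hU : IsOpen U)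
    (hB : ∀ x ∈ U, HasDerivAt B (A x) x)
    (hcomm : ∀ x ∈ U, Commute (A x) (B x))
    (c : n → ℂ) (x : ℂ) (hx : x ∈ U) :
    HasDerivAt (fun y : ℂ => (NormedSpace.exp (B y)).mulVec c)
      ((A x).mulVec ((NormedSpace.exp (B x)).mulVec c)) x := by
  have hpi : ∀ i j, HasDerivAt (fun y => B y i j) (A x i j) x := fun i j =>
    hasDerivAt_pi.1 (hasDerivAt_pi.1 (hB x hx) i) j
  exact auxMain (A x) B x hpi (hcomm x hx) c
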